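/- Fix d ≥ 1 and D = {0,…,d}. Let A ∈ ℝ^{m×n} with n ≤ 2. If A has no forbidden pattern, then A is universally connected: for every b ∈ ℝ^m the solution graph on {x ∈ D^n : Ax ≥ b} (edges at Hamming distance 1) is connected. -/

import Mathlib

open Matrix Finset
open scoped Classical

/-- `A` has a forbidden pattern: there are `lam ≥ 1` rows and columns, with
orderings (injective enumerations) `r`, `c`, such that in column `c l` all rows
of the pattern other than `r l`, `r (l+1)` vanish (cyclically), and
`A (r l) (c l) * A (r (l+1)) (c l) < 0` for every `l`. -/
def HasFP {m n : ℕ} (A : Matrix (Fin m) (Fin n) ℝ) : Prop :=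
  ∃ lam : ℕ, ∃ r : Fin (lam + 1) → Fin m, ∃ c : Fin (lam + 1) → Fin n,
    Function.Injective r ∧ Function.Injective c ∧
    (∀ l k : Fin (lam + 1), k ≠ l → k ≠ l + 1 → A (r k) (c l) = 0) ∧
    (∀ l : Fin (lam + 1), A (r l) (c l) * A (r (l + 1)) (c l) < 0)

/-- `A`, restricted to the set `S` of remaining columns, can be eliminated at column `j`. -/
def CanElim {m n : ℕ} (A : Matrix (Fin m) (Fin n) ℝ) (S : Finset (Fin n)) (j : Fin n) : Prop :=
  (∀ i, 0 < A i j → ∀ j' ∈ S, j' ≠ j → A i j' = 0) ∨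
  (∀ i, A i j < 0 → ∀ j' ∈ S, j' ≠ j → A i j' = 0)

/-- `A` has an elimination ordering. -/
def HasEO {m n : ℕ} (A : Matrix (Fin m) (Fin n) ℝ) : Prop :=
  ∃ e : Fin n ≃ Fin n, ∀ t : Fin n,
    CanElim A (Finset.univ.filter fun c => ∀ s : Fin n, s < t → e s ≠ c) (e t)

/-- `x ∈ {0,…,d}ⁿ` is a feasible solution of the integer linear system `A x ≥ b`. -/
def Feas {m n : ℕ} (d : ℕ) (A : Matrix (Fin m) (Fin n) ℝ) (b : Fin m → ℝ)
    (x : Fin n → ℕ) : Prop :=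
  (∀ j, x j ≤ d) ∧ ∀ i, b i ≤ ∑ j, A i j * (x j : ℝ)

/-- Adjacency in the solution graph `G(A,b)`: both endpoints are feasible and
their Hamming distance is `1`. -/
def SGAdj {m n : ℕ} (d : ℕ) (A : Matrix (Fin m) (Fin n) ℝ) (b : Fin m → ℝ)
    (x y : Fin n → ℕ) : Prop :=
  Feas d A b x ∧ Feas d A b y ∧ hammingDist x y = 1

/-- The solution graph `G(A,b)` is connected. -/
def SGConn {m n : ℕ} (d : ℕ) (A : Matrix (Fin m) (Fin n) ℝ) (b : Fin m → ℝ) : Prop :=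
  ∀ x y : Fin n → ℕ, Feas d A b x → Feas d A b y →
    Relation.ReflTransGen (SGAdj d A b) x y

/-- `A` is universally connected. -/
def UnivConn {m n : ℕ} (d : ℕ) (A : Matrix (Fin m) (Fin n) ℝ) : Prop :=
  ∀ b : Fin m → ℝ, SGConn d A b

section Aux
variable {m n : ℕ} (d : ℕ) (A : Matrix (Fin m) (Fin n) ℝ) (b : Fin m → ℝ)

private lemma sum_split (x : Fin n → ℕ) (j : Fin n) (i : Fin m) :
    ∑ j', A i j' * (x j' : ℝ) = A i j * (x j : ℝ) + ∑ j' ∈ univ.erase j, A i j' * (x j' : ℝ) := by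
  rw [← Finset.sum_erase_add _ _ (mem_univ j), add_comm]

private lemma sum_update (x : Fin n → ℕ) (j : Fin n) (L : ℕ) (i : Fin m) :
    ∑ j', A i j' * ((Function.update x j L) j' : ℝ)
      = A i j * (L : ℝ) + ∑ j' ∈ univ.erase j, A i j' * (x j' : ℝ) := by
  rw [sum_split A (Function.update x j L) j i, Function.update_self]
  congr 1
  refine Finset.sum_congr rfl fun j' hj' => ?_
  rw [Function.update_of_ne (Finset.ne_of_mem_erase hj')]

private lemma feas_update (x : Fin n → ℕ) (j : Fin n) (L : ℕ)
    (hbd : ∀ j', j' ≠ j → x j' ≤ d) (hLd : L ≤ d)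
    (h : ∀ i, b i ≤ A i j * (L : ℝ) + ∑ j' ∈ univ.erase j, A i j' * (x j' : ℝ)) :
    Feas d A b (Function.update x j L) := by
  refine ⟨fun j' => ?_, fun i => ?_⟩
  · rcases eq_or_ne j' j with rfl | hne
    · simpa using hLd
    · rw [Function.update_of_ne hne]; exact hbd j' hne
  · rw [sum_update]; exact h i

private lemma feas_convex (x : Fin n → ℕ) (j : Fin n) (u v w : ℕ) (huw : u ≤ w) (hwv : w ≤ v)
    (hu : Feas d A b (Function.update x j u)) (hv : Feas d A b (Function.update x j v)) :
    Feas d A b (Function.update x j w) := by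
  have hwd : w ≤ d := le_trans hwv (by simpa using hv.1 j)
  refine feas_update d A b x j w
    (fun j' hne => by simpa [Function.update_of_ne hne] using hu.1 j') hwd fun i => ?_
  have h1 := hu.2 i
  have h2 := hv.2 i
  rw [sum_update] at h1 h2
  rcases le_or_gt 0 (A i j) with hA | hA
  · have : A i j * (u : ℝ) ≤ A i j * (w : ℝ) :=
      mul_le_mul_of_nonneg_left (by exact_mod_cast huw) hA
    linarith
  · have : A i j * (v : ℝ) ≤ A i j * (w : ℝ) :=
      mul_le_mul_of_nonpos_left (by exact_mod_cast hwv) hA.le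
    linarith

private lemma hamming_update (x : Fin n → ℕ) (j : Fin n) (u v : ℕ) (huv : u ≠ v) :
    hammingDist (Function.update x j u) (Function.update x j v) = 1 := by
  show (Finset.filter _ Finset.univ).card = 1
  have : (Finset.filter (fun i => Function.update x j u i ≠ Function.update x j v i)
      Finset.univ) = {j} := by
    ext k
    rcases eq_or_ne k j with rfl | hk
    · simp [huv]
    · simp [Function.update_of_ne hk, hk]
  rw [this, Finset.card_singleton]

private lemma sgadj_symm : Symmetric (SGAdj d A b) := by
  rintro x y ⟨h1, h2, h3⟩
  exact ⟨h2, h1, by rwa [hammingDist_comm]⟩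

private lemma path_up (x : Fin n → ℕ) (j : Fin n) : ∀ (k u : ℕ),
    Feas d A b (Function.update x j u) → Feas d A b (Function.update x j (u + k)) →
    Relation.ReflTransGen (SGAdj d A b) (Function.update x j u) (Function.update x j (u + k))
  | 0, u, hu, _ => by simpa using Relation.ReflTransGen.refl
  | (k+1), u, hu, hv => by
    have h1 : Feas d A b (Function.update x j (u + 1)) :=
      feas_convex d A b x j u (u + (k + 1)) (u + 1) (by omega) (by omega) hu hv
    have step : SGAdj d A b (Function.update x j u) (Function.update x j (u + 1)) :=
      ⟨hu, h1, hamming_update x j u (u + 1) (by omega)⟩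
    have hv' : Feas d A b (Function.update x j (u + 1 + k)) := by
      rw [show u + 1 + k = u + (k + 1) from by omega]; exact hv
    have tail := path_up x j k (u + 1) h1 hv'
    rw [show u + 1 + k = u + (k + 1) from by omega] at tail
    exact Relation.ReflTransGen.head step tail

private lemma path1 (x : Fin n → ℕ) (j : Fin n) (u v : ℕ)
    (hu : Feas d A b (Function.update x j u)) (hv : Feas d A b (Function.update x j v)) :
    Relation.ReflTransGen (SGAdj d A b) (Function.update x j u) (Function.update x j v) := by
  rcases le_total u v with hle | hle
  · obtain ⟨k, rfl⟩ := Nat.exists_eq_add_of_le hle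
    exact path_up d A b x j k u hu hv
  · obtain ⟨k, rfl⟩ := Nat.exists_eq_add_of_le hle
    exact ((@Relation.ReflTransGen.symmetric _ (SGAdj d A b) ⟨sgadj_symm d A b⟩).symm _ _) (path_up d A b x j k v hv hu)

end Aux

private lemma mkFP {m : ℕ} {A : Matrix (Fin m) (Fin 2) ℝ} {i1 i2 : Fin m}
    (h1 : A i1 0 * A i2 0 < 0) (h2 : A i1 1 * A i2 1 < 0) : HasFP A := by
  have hi : i1 ≠ i2 := by
    rintro rfl; exact absurd h1 (not_lt.2 (mul_self_nonneg _))
  refine ⟨1, ![i1, i2], ![0, 1], ?_, ?_, ?_, ?_⟩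
  · intro a c hac
    fin_cases a <;> fin_cases c <;> simp_all
  · intro a c hac
    fin_cases a <;> fin_cases c <;> simp_all
  · intro l k hkl hkl1
    exfalso; revert hkl hkl1; fin_cases l <;> fin_cases k <;> decide
  · intro l
    fin_cases l
    · simpa using h1
    · simpa [mul_comm] using h2

private lemma exists_elim {m : ℕ} (A : Matrix (Fin m) (Fin 2) ℝ) (h : ¬ HasFP A) :
    ∃ j : Fin 2, CanElim A Finset.univ j := by
  by_contra hc
  push_neg at hc
  have h0 := hc 0
  have h1 := hc 1
  unfold CanElim at h0 h1
  push_neg at h0 h1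
  obtain ⟨⟨p0, hp0, j1, _, hj1, hp0'⟩, ⟨n0, hn0, j2, _, hj2, hn0'⟩⟩ := h0
  obtain ⟨⟨p1, hp1, j3, _, hj3, hp1'⟩, ⟨n1, hn1, j4, _, hj4, hn1'⟩⟩ := h1
  have e1 : j1 = 1 := by omega
  have e2 : j2 = 1 := by omega
  have e3 : j3 = 0 := by omega
  have e4 : j4 = 0 := by omega
  subst e1 e2 e3 e4
  rcases hp0'.lt_or_gt with hA | hA
  · rcases hp1'.lt_or_gt with hB | hB
    · exact h (mkFP (mul_neg_of_pos_of_neg hp0 hB) (mul_neg_of_neg_of_pos hA hp1))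
    · rcases hn0'.lt_or_gt with hC | hC
      · exact h (mkFP (mul_neg_of_neg_of_pos hn0 hB) (mul_neg_of_neg_of_pos hC hp1))
      · exact h (mkFP (mul_neg_of_pos_of_neg hp0 hn0) (mul_neg_of_neg_of_pos hA hC))
  · rcases hn1'.lt_or_gt with hB | hB
    · exact h (mkFP (mul_neg_of_pos_of_neg hp0 hB) (mul_neg_of_pos_of_neg hA hn1))
    · rcases hn0'.lt_or_gt with hC | hC
      · exact h (mkFP (mul_neg_of_pos_of_neg hp0 hn0) (mul_neg_of_pos_of_neg hA hC))
      · exact h (mkFP (mul_neg_of_neg_of_pos hn0 hB) (mul_neg_of_pos_of_neg hC hn1))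

private lemma glue {m : ℕ} (d : ℕ) (A : Matrix (Fin m) (Fin 2) ℝ) (b : Fin m → ℝ)
    (j : Fin 2) (x y : Fin 2 → ℕ) (L : ℕ)
    (hx : Feas d A b x) (hy : Feas d A b y)
    (hx' : Feas d A b (Function.update x j L)) (hy' : Feas d A b (Function.update y j L)) :
    Relation.ReflTransGen (SGAdj d A b) x y := by
  have hne : ∀ jj : Fin 2, jj ≠ jj + 1 := by decide
  have hall : ∀ k jj : Fin 2, k = jj ∨ k = jj + 1 := by decide
  have p1 := path1 d A b x j (x j) L (by rwa [Function.update_eq_self]) hx'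
  rw [Function.update_eq_self] at p1
  have p3 := path1 d A b y j (y j) L (by rwa [Function.update_eq_self]) hy'
  rw [Function.update_eq_self] at p3
  have e2 : Function.update (Function.update x j L) (j + 1) (y (j + 1))
      = Function.update y j L := by
    funext k
    rcases hall k j with rfl | rfl
    · rw [Function.update_of_ne (hne k), Function.update_self, Function.update_self]
    · rw [Function.update_self, Function.update_of_ne (hne j).symm]
  have p2 := path1 d A b (Function.update x j L) (j + 1)
    (Function.update x j L (j + 1)) (y (j + 1))
    (by rwa [Function.update_eq_self]) (by rwa [e2])
  rw [Function.update_eq_self, e2] at p2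
  exact p1.trans (p2.trans (((@Relation.ReflTransGen.symmetric _ (SGAdj d A b) ⟨sgadj_symm d A b⟩).symm _ _) p3))

theorem stmt13 {m n : ℕ} (d : ℕ) (hd : 1 ≤ d) (hn : n ≤ 2)
    (A : Matrix (Fin m) (Fin n) ℝ) (h : ¬ HasFP A) : UnivConn d A := by
  interval_cases n
  · intro b x y hx hy
    have : x = y := funext fun i => i.elim0
    rw [this]
  · intro b x y hx hy
    have hy' : y = Function.update x 0 (y 0) := by
      funext k
      have hk : k = 0 := Subsingleton.elim k 0
      subst hk; simp
    rw [hy']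
    have := path1 d A b x 0 (x 0) (y 0)
      (by rwa [Function.update_eq_self]) (by rw [← hy']; exact hy)
    rwa [Function.update_eq_self] at this
  · obtain ⟨j, hj⟩ := exists_elim A h
    intro b x y hx hy
    rcases hj with hpos | hneg
    · -- positive rows are isolated; push j down to the min
      have hrow : ∀ z : Fin 2 → ℕ, Feas d A b z → ∀ i, 0 < A i j →
          b i ≤ A i j * (z j : ℝ) := by
        intro z hz i hi
        have hs := hz.2 i
        rwa [Finset.sum_eq_single j
          (fun j' _ hj' => by rw [hpos i hi j' (mem_univ _) hj', zero_mul])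
          (fun hjj => absurd (mem_univ j) hjj)] at hs
      have himp : ∀ z : Fin 2 → ℕ, Feas d A b z → min (x j) (y j) ≤ z j →
          Feas d A b (Function.update z j (min (x j) (y j))) := by
        intro z hz hLz
        refine feas_update d A b z j _ (fun j' _ => hz.1 j') (le_trans hLz (hz.1 j)) fun i => ?_
        rcases lt_or_ge 0 (A i j) with hAij | hAij
        · have hz0 : ∑ j' ∈ univ.erase j, A i j' * (z j' : ℝ) = 0 :=
            Finset.sum_eq_zero fun j' hj' => by
              rw [hpos i hAij j' (mem_univ _) (Finset.ne_of_mem_erase hj'), zero_mul]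
          rw [hz0, add_zero]
          rcases min_choice (x j) (y j) with hmin | hmin <;> rw [hmin]
          · exact hrow x hx i hAij
          · exact hrow y hy i hAij
        · have hs := hz.2 i
          rw [sum_split A z j i] at hs
          have : A i j * (z j : ℝ) ≤ A i j * ((min (x j) (y j) : ℕ) : ℝ) :=
            mul_le_mul_of_nonpos_left (by exact_mod_cast hLz) hAij
          linarith
      exact glue d A b j x y _ hx hy (himp x hx (min_le_left _ _)) (himp y hy (min_le_right _ _))
    · -- negative rows are isolated; push j up to the max
      have hrow : ∀ z : Fin 2 → ℕ, Feas d A b z → ∀ i, A i j < 0 →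
          b i ≤ A i j * (z j : ℝ) := by
        intro z hz i hi
        have hs := hz.2 i
        rwa [Finset.sum_eq_single j
          (fun j' _ hj' => by rw [hneg i hi j' (mem_univ _) hj', zero_mul])
          (fun hjj => absurd (mem_univ j) hjj)] at hs
      have himp : ∀ z : Fin 2 → ℕ, Feas d A b z → z j ≤ max (x j) (y j) →
          Feas d A b (Function.update z j (max (x j) (y j))) := by
        intro z hz hLz
        refine feas_update d A b z j _ (fun j' _ => hz.1 j')
          (max_le (hx.1 j) (hy.1 j)) fun i => ?_
        rcases lt_or_ge (A i j) 0 with hAij | hAij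
        · have hz0 : ∑ j' ∈ univ.erase j, A i j' * (z j' : ℝ) = 0 :=
            Finset.sum_eq_zero fun j' hj' => by
              rw [hneg i hAij j' (mem_univ _) (Finset.ne_of_mem_erase hj'), zero_mul]
          rw [hz0, add_zero]
          rcases max_choice (x j) (y j) with hmax | hmax <;> rw [hmax]
          · exact hrow x hx i hAij
          · exact hrow y hy i hAij
        · have hs := hz.2 i
          rw [sum_split A z j i] at hs
          have : A i j * (z j : ℝ) ≤ A i j * ((max (x j) (y j) : ℕ) : ℝ) :=
            mul_le_mul_of_nonneg_left (by exact_mod_cast hLz) hAij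
          linarith
      exact glue d A b j x y _ hx hy (himp x hx (le_max_left _ _)) (himp y hy (le_max_right _ _))
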